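/- Let n ≥ 1, let r_1, ..., r_{n−1} be complex numbers with r_l^2 ≠ r_m^2 for all l ≠ m, and let μ_1, ..., μ_n be arbitrary complex numbers. Then ∑_{(ρ_1,...,ρ_{n−1}) ∈ {0,1}^{n−1}} ∏_{l=1}^{n−1} (−1)^{ρ_l} · ∏_{l=1}^{n−1} ∏_{k=1}^{n} ((−1)^{ρ_l} r_l + μ_k) / ∏_{1≤l<m≤n−1} ((−1)^{ρ_m} r_m + (−1)^{ρ_l} r_l) = 2^{n−1} (∏_{l=1}^{n−1} r_l) ∏_{1≤i<j≤n} (μ_i + μ_j). -/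

import Mathlib

open Finset Polynomial

noncomputable def isg (a : Fin 2) : ℂ := (-1 : ℂ) ^ (a : ℕ)

lemma isg_mul_self (a : Fin 2) : isg a * isg a = 1 := by fin_cases a <;> simp [isg]

lemma isg_ne_zero (a : Fin 2) : isg a ≠ 0 := by fin_cases a <;> simp [isg]

lemma isg_add_one (a : Fin 2) : isg (a + 1) = - isg a := by fin_cases a <;> simp [isg]

lemma isg_of_ne {a b : Fin 2} (h : a ≠ b) : isg a = - isg b := by
  fin_cases a <;> fin_cases b <;> simp_all [isg]

noncomputable def Sfun (N K : ℕ) (r : Fin N → ℂ) (μ : Fin K → ℂ) : ℂ :=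
  ∑ ρ : Fin N → Fin 2,
    (∏ l, isg (ρ l)) * (∏ l, ∏ k, (isg (ρ l) * r l + μ k)) /
      ∏ l, ∏ m, (if l < m then isg (ρ m) * r m + isg (ρ l) * r l else 1)

noncomputable def pairProd {K : ℕ} (μ : Fin K → ℂ) : ℂ :=
  ∏ i, ∏ j, (if i < j then μ i + μ j else 1)

section basic

variable {N : ℕ} {r : Fin N → ℂ}

/-- distinct squares condition -/
def DSq {N : ℕ} (r : Fin N → ℂ) : Prop := ∀ l m, l ≠ m → (r l) ^ 2 ≠ (r m) ^ 2

lemma add_ne_zero_of_dsq (hr : DSq r) {l m : Fin N} (h : l ≠ m) (a b : Fin 2) :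
    isg a * r m + isg b * r l ≠ 0 := by
  intro H
  have ha := isg_mul_self a
  have hb := isg_mul_self b
  have h2 : (r m) ^ 2 = (r l) ^ 2 := by
    linear_combination (isg a * r m - isg b * r l) * H - r m ^ 2 * ha + r l ^ 2 * hb
  exact hr m l (fun e => h e.symm) h2

lemma denom_ne_zero (hr : DSq r) (ρ : Fin N → Fin 2) :
    (∏ l, ∏ m, (if l < m then isg (ρ m) * r m + isg (ρ l) * r l else 1)) ≠ 0 := by
  rw [Finset.prod_ne_zero_iff]
  intro l _
  rw [Finset.prod_ne_zero_iff]
  intro m _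
  split
  · exact add_ne_zero_of_dsq hr (ne_of_lt ‹l < m›) _ _
  · exact one_ne_zero

end basic

lemma Sfun_eq_zero_of_zero {N K : ℕ} (r : Fin N → ℂ) (μ : Fin K → ℂ)
    (l₀ : Fin N) (h0 : r l₀ = 0) : Sfun N K r μ = 0 := by
  classical
  unfold Sfun
  apply Finset.sum_ninvolution (g := fun ρ => Function.update ρ l₀ (ρ l₀ + 1))
  · intro ρ
    set ρ' := Function.update ρ l₀ (ρ l₀ + 1) with hρ'
    have hs : ∀ l, isg (ρ' l) * r l = isg (ρ l) * r l := by
      intro l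
      rcases eq_or_ne l l₀ with rfl | hne
      · rw [h0, mul_zero, mul_zero]
      · rw [hρ', Function.update_of_ne hne]
    have hA : (∏ l, isg (ρ' l)) = - ∏ l, isg (ρ l) := by
      rw [← Finset.prod_compl_mul_prod ({l₀} : Finset (Fin N)) (fun l => isg (ρ' l)),
          ← Finset.prod_compl_mul_prod ({l₀} : Finset (Fin N)) (fun l => isg (ρ l))]
      rw [Finset.prod_singleton, Finset.prod_singleton]
      have h1 : ∀ l ∈ ({l₀} : Finset (Fin N))ᶜ, isg (ρ' l) = isg (ρ l) := by
        intro l hl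
        rw [Finset.mem_compl, Finset.mem_singleton] at hl
        rw [hρ', Function.update_of_ne hl]
      rw [Finset.prod_congr rfl h1, hρ', Function.update_self, isg_add_one]
      ring
    have hB : (∏ l, ∏ k, (isg (ρ' l) * r l + μ k)) = ∏ l, ∏ k, (isg (ρ l) * r l + μ k) := by
      exact Finset.prod_congr rfl fun l _ => Finset.prod_congr rfl fun k _ => by rw [hs l]
    have hC : (∏ l, ∏ m, (if l < m then isg (ρ' m) * r m + isg (ρ' l) * r l else 1))
        = ∏ l, ∏ m, (if l < m then isg (ρ m) * r m + isg (ρ l) * r l else 1) := by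
      exact Finset.prod_congr rfl fun l _ => Finset.prod_congr rfl fun m _ => by
        rw [hs l, hs m]
    rw [hA, hB, hC]; ring
  · intro ρ _
    intro hEq
    have := congrFun hEq l₀
    rw [Function.update_self] at this
    have : ρ l₀ + 1 = ρ l₀ := this
    revert this
    generalize ρ l₀ = a
    fin_cases a <;> decide
  · intro ρ; exact Finset.mem_univ _
  · intro ρ
    funext l
    rcases eq_or_ne l l₀ with rfl | hne
    · simp only [Function.update_self]
      generalize ρ l = a
      fin_cases a <;> decide
    · simp only [Function.update_of_ne hne]

lemma pair_split {M : Type*} [CommMonoid M] {N : ℕ} (p : Fin (N + 1))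
    (g : Fin (N + 1) → Fin (N + 1) → M) :
    (∏ l, ∏ m, (if l < m then g l m else 1)) =
      ((∏ m, (if p < m then g p m else 1)) *
        ∏ i : Fin N, (if p.succAbove i < p then g (p.succAbove i) p else 1)) *
      ∏ i : Fin N, ∏ j : Fin N, (if i < j then g (p.succAbove i) (p.succAbove j) else 1) := by
  rw [Fin.prod_univ_succAbove (fun l => ∏ m, (if l < m then g l m else 1)) p]
  have inner : ∀ i : Fin N,
      (∏ m, (if p.succAbove i < m then g (p.succAbove i) m else 1)) =
        (if p.succAbove i < p then g (p.succAbove i) p else 1) *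
          ∏ j : Fin N, (if i < j then g (p.succAbove i) (p.succAbove j) else 1) := by
    intro i
    rw [Fin.prod_univ_succAbove (fun m => (if p.succAbove i < m then g (p.succAbove i) m else 1)) p]
    congr 1
    refine Finset.prod_congr rfl fun j _ => ?_
    exact if_congr (Fin.strictMono_succAbove p).lt_iff_lt rfl rfl
  rw [Finset.prod_congr rfl fun i _ => inner i, Finset.prod_mul_distrib, mul_assoc]

lemma l0_factor {N : ℕ} (p : Fin (N + 1)) (s : Fin (N + 1) → ℂ) :
    ((∏ m, (if p < m then s m + s p else 1)) *
      ∏ i : Fin N, (if p.succAbove i < p then s p + s (p.succAbove i) else 1)) =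
      ∏ i : Fin N, (s (p.succAbove i) + s p) := by
  rw [Fin.prod_univ_succAbove (fun m => (if p < m then s m + s p else 1)) p,
      if_neg (lt_irrefl p), one_mul, ← Finset.prod_mul_distrib]
  refine Finset.prod_congr rfl fun i _ => ?_
  rcases (Fin.succAbove_ne p i).lt_or_gt with h | h
  · rw [if_neg (asymm h), if_pos h, one_mul, add_comm]
  · rw [if_pos h, if_neg (asymm h), mul_one]

lemma pair_snoc_split {K : ℕ} (μ' : Fin K → ℂ) (x : ℂ) :
    pairProd (Fin.snoc μ' x : Fin (K + 1) → ℂ) =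
      pairProd μ' * ∏ i, (μ' i + x) := by
  unfold pairProd
  rw [Fin.prod_univ_castSucc
    (f := fun i : Fin (K+1) => ∏ j, (if i < j then (Fin.snoc μ' x : Fin (K+1) → ℂ) i + (Fin.snoc μ' x : Fin (K+1) → ℂ) j else 1))]
  have hlast : (∏ j : Fin (K+1),
      (if Fin.last K < j then (Fin.snoc μ' x : Fin (K+1) → ℂ) (Fin.last K) + (Fin.snoc μ' x : Fin (K+1) → ℂ) j else 1)) = 1 := by
    refine Finset.prod_eq_one fun j _ => if_neg (not_lt.2 (Fin.le_last j))
  rw [hlast, mul_one]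
  have inner : ∀ i : Fin K,
      (∏ j : Fin (K+1), (if (Fin.castSucc i) < j
          then (Fin.snoc μ' x : Fin (K+1) → ℂ) (Fin.castSucc i) + (Fin.snoc μ' x : Fin (K+1) → ℂ) j else 1)) =
        (∏ j : Fin K, (if i < j then μ' i + μ' j else 1)) * (μ' i + x) := by
    intro i
    rw [Fin.prod_univ_castSucc (f := fun j : Fin (K+1) => (if (Fin.castSucc i) < j
          then (Fin.snoc μ' x : Fin (K+1) → ℂ) (Fin.castSucc i) + (Fin.snoc μ' x : Fin (K+1) → ℂ) j else 1))]
    rw [if_pos (Fin.castSucc_lt_last i), Fin.snoc_last, Fin.snoc_castSucc]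
    congr 1
    refine Finset.prod_congr rfl fun j _ => ?_
    rw [Fin.snoc_castSucc]
    exact if_congr Fin.castSucc_lt_castSucc_iff rfl rfl
  rw [Finset.prod_congr rfl fun i _ => inner i, Finset.prod_mul_distrib]

lemma Sfun_snoc_reduce {N K : ℕ} (r : Fin (N + 1) → ℂ) (hr : DSq r)
    (p : Fin (N + 1)) (b : Fin 2) (μ' : Fin K → ℂ) :
    Sfun (N + 1) (K + 1) r (Fin.snoc μ' (isg b * r p)) =
      2 * r p * (∏ k, (isg b * r p + μ' k)) * Sfun N K (r ∘ p.succAbove) μ' := by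
  classical
  set w : ℂ := isg b * r p with hw
  set μ : Fin (K + 1) → ℂ := Fin.snoc μ' w with hμ
  have hμc : ∀ k : Fin K, μ (Fin.castSucc k) = μ' k := fun k => Fin.snoc_castSucc ..
  have hμl : μ (Fin.last K) = w := Fin.snoc_last ..
  -- the term of the big sum, as a function of ρ
  set T : (Fin (N + 1) → Fin 2) → ℂ := fun ρ =>
    (∏ l, isg (ρ l)) * (∏ l, ∏ k, (isg (ρ l) * r l + μ k)) /
      ∏ l, ∏ m, (if l < m then isg (ρ m) * r m + isg (ρ l) * r l else 1) with hT
  have hS : Sfun (N + 1) (K + 1) r μ = ∑ ρ : Fin (N + 1) → Fin 2, T ρ := rfl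
  -- inner product over k splits off the last one
  have hBinner : ∀ z : ℂ, (∏ k, (z + μ k)) = (∏ k : Fin K, (z + μ' k)) * (z + w) := by
    intro z
    rw [Fin.prod_univ_castSucc (f := fun k : Fin (K + 1) => z + μ k)]
    simp only [hμc, hμl]
  -- terms with the wrong sign at p vanish
  have hvanish : ∀ (b' : Fin 2) (ρ' : Fin N → Fin 2), b' ≠ b →
      T (p.insertNth (α := fun _ => Fin 2) b' ρ') = 0 := by
    intro b' ρ' hne
    set ρ := p.insertNth (α := fun _ => Fin 2) b' ρ' with hρ
    have hzero : (∏ l, ∏ k, (isg (ρ l) * r l + μ k)) = 0 := by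
      apply Finset.prod_eq_zero (Finset.mem_univ p)
      apply Finset.prod_eq_zero (Finset.mem_univ (Fin.last K))
      rw [hμl, hρ, Fin.insertNth_apply_same, hw, isg_of_ne hne]
      ring
    rw [hT]
    simp only [hzero, mul_zero, zero_div]
  -- the main terms
  have hmain : ∀ ρ' : Fin N → Fin 2,
      T (p.insertNth (α := fun _ => Fin 2) b ρ') = 2 * r p * (∏ k, (w + μ' k)) *
        ((∏ i, isg (ρ' i)) *
          (∏ i, ∏ k, (isg (ρ' i) * (r ∘ p.succAbove) i + μ' k)) /
          ∏ i, ∏ j, (if i < j then isg (ρ' j) * (r ∘ p.succAbove) j +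
            isg (ρ' i) * (r ∘ p.succAbove) i else 1)) := by
    intro ρ'
    set ρ := p.insertNth (α := fun _ => Fin 2) b ρ' with hρ
    have hρp : ρ p = b := Fin.insertNth_apply_same ..
    have hρs : ∀ i, ρ (p.succAbove i) = ρ' i := fun i => Fin.insertNth_apply_succAbove ..
    have hA : (∏ l, isg (ρ l)) = isg b * ∏ i, isg (ρ' i) := by
      rw [Fin.prod_univ_succAbove (fun l => isg (ρ l)) p, hρp]
      exact congrArg _ (Finset.prod_congr rfl fun i _ => by rw [hρs i])
    have hB : (∏ l, ∏ k, (isg (ρ l) * r l + μ k)) =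
        ((∏ k : Fin K, (w + μ' k)) * (w + w)) *
          ((∏ i, ∏ k : Fin K, (isg (ρ' i) * r (p.succAbove i) + μ' k)) *
            ∏ i, (isg (ρ' i) * r (p.succAbove i) + w)) := by
      rw [Fin.prod_univ_succAbove (fun l => ∏ k, (isg (ρ l) * r l + μ k)) p]
      rw [hBinner (isg (ρ p) * r p)]
      rw [Finset.prod_congr rfl fun i (_ : i ∈ univ) => hBinner (isg (ρ (p.succAbove i)) * r (p.succAbove i))]
      rw [Finset.prod_mul_distrib]
      rw [hρp, ← hw]
      have e1 : (∏ i, ∏ k : Fin K, (isg (ρ (p.succAbove i)) * r (p.succAbove i) + μ' k)) =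
          ∏ i, ∏ k : Fin K, (isg (ρ' i) * r (p.succAbove i) + μ' k) :=
        Finset.prod_congr rfl fun i _ => by rw [hρs i]
      have e2 : (∏ i, (isg (ρ (p.succAbove i)) * r (p.succAbove i) + w)) =
          ∏ i, (isg (ρ' i) * r (p.succAbove i) + w) :=
        Finset.prod_congr rfl fun i _ => by rw [hρs i]
      rw [e1, e2]
    have hC : (∏ l, ∏ m, (if l < m then isg (ρ m) * r m + isg (ρ l) * r l else 1)) =
        (∏ i, (isg (ρ' i) * r (p.succAbove i) + w)) *
          ∏ i, ∏ j, (if i < j then isg (ρ' j) * r (p.succAbove j) +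
            isg (ρ' i) * r (p.succAbove i) else 1) := by
      rw [pair_split p (fun l m => isg (ρ m) * r m + isg (ρ l) * r l)]
      have e0 : ∀ l, isg (ρ l) * r l = (fun l => isg (ρ l) * r l) l := fun _ => rfl
      rw [l0_factor p (fun l => isg (ρ l) * r l)]
      have e1 : (∏ i, (isg (ρ (p.succAbove i)) * r (p.succAbove i) + isg (ρ p) * r p)) =
          ∏ i, (isg (ρ' i) * r (p.succAbove i) + w) :=
        Finset.prod_congr rfl fun i _ => by rw [hρs i, hρp, ← hw]
      have e2 : (∏ i, ∏ j, (if i < j then isg (ρ (p.succAbove j)) * r (p.succAbove j) +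
          isg (ρ (p.succAbove i)) * r (p.succAbove i) else 1)) =
          ∏ i, ∏ j, (if i < j then isg (ρ' j) * r (p.succAbove j) +
            isg (ρ' i) * r (p.succAbove i) else 1) :=
        Finset.prod_congr rfl fun i _ => Finset.prod_congr rfl fun j _ => by
          rw [hρs i, hρs j]
      rw [e1, e2]
    have hD : (∏ i, (isg (ρ' i) * r (p.succAbove i) + w)) ≠ 0 := by
      rw [Finset.prod_ne_zero_iff]
      intro i _
      rw [hw]
      exact add_ne_zero_of_dsq hr (p.succAbove_ne i).symm (ρ' i) b
    rw [hT]
    simp only []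
    rw [hA, hB, hC]
    set A' := ∏ i, isg (ρ' i)
    set B' := ∏ i, ∏ k : Fin K, (isg (ρ' i) * r (p.succAbove i) + μ' k)
    set D := ∏ i, (isg (ρ' i) * r (p.succAbove i) + w)
    set C' := ∏ i, ∏ j, (if i < j then isg (ρ' j) * r (p.succAbove j) +
      isg (ρ' i) * r (p.succAbove i) else 1)
    have hB'eq : (∏ i, ∏ k : Fin K, (isg (ρ' i) * (r ∘ p.succAbove) i + μ' k)) = B' := rfl
    have hC'eq : (∏ i, ∏ j, (if i < j then isg (ρ' j) * (r ∘ p.succAbove) j +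
      isg (ρ' i) * (r ∘ p.succAbove) i else 1)) = C' := rfl
    rw [hB'eq, hC'eq]
    have hnum : isg b * A' * ((∏ k : Fin K, (w + μ' k)) * (w + w) * (B' * D)) =
        (2 * r p * (∏ k : Fin K, (w + μ' k)) * (A' * B')) * D := by
      rw [hw]
      linear_combination (2 * r p * (∏ k : Fin K, ((isg b * r p) + μ' k)) * A' * B' * D) *
        isg_mul_self b
    rw [hnum, mul_comm D C', mul_div_mul_right _ _ hD]
    ring
  -- assemble
  rw [hS, ← Equiv.sum_comp (Fin.insertNthEquiv (fun _ => Fin 2) p) T, Fintype.sum_prod_type]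
  rw [Finset.sum_eq_single_of_mem b (Finset.mem_univ b)
    (fun b' _ hb' => Finset.sum_eq_zero fun ρ' _ => by
      simpa [Fin.insertNthEquiv] using hvanish b' ρ' hb')]
  rw [Finset.sum_congr rfl fun ρ' _ => by simpa [Fin.insertNthEquiv] using hmain ρ']
  rw [← Finset.mul_sum]
  rfl

lemma isg_injective : Function.Injective isg := by
  intro a b h
  fin_cases a <;> fin_cases b <;> simp_all [isg] <;> norm_num at h

lemma Sfun_step {N K : ℕ} (hK : K ≤ N + 1) (r : Fin (N + 1) → ℂ) (hr : DSq r)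
    (IH : ∀ (r' : Fin N → ℂ), DSq r' → ∀ μ'' : Fin K → ℂ,
      Sfun N K r' μ'' = 2 ^ N * (∏ l, r' l) * pairProd μ'') :
    ∀ μ : Fin (K + 1) → ℂ, Sfun (N + 1) (K + 1) r μ = 2 ^ (N + 1) * (∏ l, r l) * pairProd μ := by
  intro μ
  by_cases h0 : ∃ l, r l = 0
  · obtain ⟨l₀, hl⟩ := h0
    rw [Sfun_eq_zero_of_zero r μ l₀ hl,
      show (∏ l, r l) = 0 from Finset.prod_eq_zero (Finset.mem_univ l₀) hl]
    ring
  push_neg at h0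
  classical
  set μ' : Fin K → ℂ := Fin.init μ with hμ'
  set x := μ (Fin.last K) with hx
  have hsnoc : μ = Fin.snoc μ' x := (Fin.snoc_init_self μ).symm
  set coef : (Fin (N + 1) → Fin 2) → ℂ := fun ρ =>
    (∏ l, isg (ρ l)) * (∏ l, ∏ k : Fin K, (isg (ρ l) * r l + μ' k)) /
      ∏ l, ∏ m, (if l < m then isg (ρ m) * r m + isg (ρ l) * r l else 1) with hcoef
  have hSf : ∀ y : ℂ, Sfun (N + 1) (K + 1) r (Fin.snoc μ' y) =
      ∑ ρ : Fin (N + 1) → Fin 2, coef ρ * ∏ l, (isg (ρ l) * r l + y) := by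
    intro y
    unfold Sfun
    refine Finset.sum_congr rfl fun ρ _ => ?_
    have hin : ∀ l, (∏ k : Fin (K + 1), (isg (ρ l) * r l + (Fin.snoc μ' y : Fin (K+1) → ℂ) k)) =
        (∏ k : Fin K, (isg (ρ l) * r l + μ' k)) * (isg (ρ l) * r l + y) := by
      intro l
      rw [Fin.prod_univ_castSucc
        (f := fun k : Fin (K + 1) => isg (ρ l) * r l + (Fin.snoc μ' y : Fin (K+1) → ℂ) k)]
      simp only [Fin.snoc_castSucc, Fin.snoc_last]
    rw [Finset.prod_congr rfl fun l (_ : l ∈ univ) => hin l, Finset.prod_mul_distrib, hcoef]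
    field_simp
  set pL : Polynomial ℂ := ∑ ρ : Fin (N + 1) → Fin 2,
    Polynomial.C (coef ρ) * ∏ l, (Polynomial.X + Polynomial.C (isg (ρ l) * r l)) with hpL
  set pR : Polynomial ℂ := Polynomial.C (2 ^ (N + 1) * (∏ l, r l) * pairProd μ') *
    ∏ i : Fin K, (Polynomial.X + Polynomial.C (μ' i)) with hpR
  have hevalL : ∀ y : ℂ, pL.eval y = Sfun (N + 1) (K + 1) r (Fin.snoc μ' y) := by
    intro y
    rw [hSf y, hpL, Polynomial.eval_finset_sum]
    refine Finset.sum_congr rfl fun ρ _ => ?_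
    rw [Polynomial.eval_mul, Polynomial.eval_C, Polynomial.eval_prod]
    congr 1
    refine Finset.prod_congr rfl fun l _ => ?_
    simp [add_comm]
  have hevalR : ∀ y : ℂ, pR.eval y =
      2 ^ (N + 1) * (∏ l, r l) * pairProd (Fin.snoc μ' y) := by
    intro y
    rw [pair_snoc_split, hpR, Polynomial.eval_mul, Polynomial.eval_C, Polynomial.eval_prod]
    have : (∏ i, Polynomial.eval y (Polynomial.X + Polynomial.C (μ' i))) = ∏ i, (μ' i + y) :=
      Finset.prod_congr rfl fun i _ => by simp [add_comm]
    rw [this]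
    ring
  set p : Polynomial ℂ := pL - pR with hp
  have hdegL : pL.natDegree ≤ N + 1 := by
    refine Polynomial.natDegree_sum_le_of_forall_le _ _ fun ρ _ => ?_
    refine le_trans (Polynomial.natDegree_C_mul_le _ _) ?_
    rw [Polynomial.natDegree_prod_of_monic _ _ fun l _ => Polynomial.monic_X_add_C _,
      Finset.sum_congr rfl fun l _ => Polynomial.natDegree_X_add_C _]
    simp
  have hdegR : pR.natDegree ≤ N + 1 := by
    refine le_trans (Polynomial.natDegree_C_mul_le _ _) (le_trans ?_ hK)
    rw [Polynomial.natDegree_prod_of_monic _ _ fun l _ => Polynomial.monic_X_add_C _,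
      Finset.sum_congr rfl fun l _ => Polynomial.natDegree_X_add_C _]
    simp
  have hdegp : p.natDegree < Fintype.card (Fin (N + 1) × Fin 2) := by
    have h1 := Polynomial.natDegree_sub_le pL pR
    have hcard : Fintype.card (Fin (N + 1) × Fin 2) = (N + 1) * 2 := by simp
    rw [hcard, hp]
    have h2 : max pL.natDegree pR.natDegree ≤ N + 1 := max_le hdegL hdegR
    omega
  have hinj : Function.Injective (fun q : Fin (N + 1) × Fin 2 => isg q.2 * r q.1) := by
    rintro ⟨l, a⟩ ⟨m, b⟩ h
    simp only at h
    have hlm : l = m := by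
      by_contra hne
      have ha := isg_mul_self a
      have hb := isg_mul_self b
      refine hr l m hne ?_
      linear_combination (isg a * r l + isg b * r m) * h - r l ^ 2 * ha + r m ^ 2 * hb
    subst hlm
    have : isg a = isg b := mul_right_cancel₀ (h0 l) h
    rw [isg_injective this]
  have heval0 : ∀ q : Fin (N + 1) × Fin 2,
      p.eval ((fun q : Fin (N + 1) × Fin 2 => isg q.2 * r q.1) q) = 0 := by
    rintro ⟨l, b⟩
    simp only [hp, Polynomial.eval_sub]
    rw [hevalL, hevalR]
    rw [Sfun_snoc_reduce r hr l b μ']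
    have hr' : DSq (r ∘ l.succAbove) := by
      intro i j hij
      exact hr _ _ (fun e => hij (Fin.succAbove_right_injective e))
    rw [IH _ hr' μ', pair_snoc_split]
    rw [Fin.prod_univ_succAbove r l]
    have e1 : (∏ k, (isg b * r l + μ' k)) = ∏ k, (μ' k + isg b * r l) :=
      Finset.prod_congr rfl fun k _ => add_comm _ _
    rw [e1]
    simp only [Function.comp_apply]
    ring
  have hp0 : p = 0 :=
    Polynomial.eq_zero_of_natDegree_lt_card_of_eval_eq_zero p hinj heval0 hdegp
  have hfin := congrArg (Polynomial.eval x) hp0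
  rw [Polynomial.eval_sub, Polynomial.eval_zero, sub_eq_zero, hevalL, hevalR] at hfin
  rw [hsnoc]
  exact hfin

theorem Sfun_key : ∀ (N : ℕ) (r : Fin N → ℂ), DSq r →
    (∀ μ : Fin N → ℂ, Sfun N N r μ = 2 ^ N * (∏ l, r l) * pairProd μ) ∧
    (∀ μ : Fin (N + 1) → ℂ, Sfun N (N + 1) r μ = 2 ^ N * (∏ l, r l) * pairProd μ) := by
  intro N
  induction N with
  | zero =>
    intro r _
    have hS : ∀ (K : ℕ) (μ : Fin K → ℂ), Sfun 0 K r μ = 1 := by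
      intro K μ
      unfold Sfun
      simp
    constructor
    · intro μ
      rw [hS 0 μ]
      simp [pairProd]
    · intro μ
      rw [hS 1 μ]
      have : ∀ i j : Fin 1, ¬ i < j := by decide
      simp [pairProd, this]
  | succ N ih =>
    intro r hr
    constructor
    · exact Sfun_step (by omega) r hr (fun r' hr' => (ih r' hr').1)
    · exact Sfun_step (by omega) r hr (fun r' hr' => (ih r' hr').2)

theorem ising_norm_summation (n : ℕ) (hn : 1 ≤ n)
    (r : Fin (n - 1) → ℂ) (hr : ∀ l m, l ≠ m → (r l) ^ 2 ≠ (r m) ^ 2)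
    (μ : Fin n → ℂ) :
    ∑ ρ : Fin (n - 1) → Fin 2,
        (∏ l : Fin (n - 1), (-1 : ℂ) ^ ((ρ l : ℕ))) *
          (∏ l : Fin (n - 1), ∏ k : Fin n,
            ((-1 : ℂ) ^ ((ρ l : ℕ)) * r l + μ k)) /
          ∏ l : Fin (n - 1), ∏ m ∈ Finset.univ.filter (fun m => l < m),
            ((-1 : ℂ) ^ ((ρ m : ℕ)) * r m + (-1 : ℂ) ^ ((ρ l : ℕ)) * r l) =
      2 ^ (n - 1) * (∏ l : Fin (n - 1), r l) *
        ∏ i : Fin n, ∏ j ∈ Finset.univ.filter (fun j => i < j), (μ i + μ j) := by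
  obtain ⟨N, rfl⟩ : ∃ N, n = N + 1 := ⟨n - 1, by omega⟩
  simp only [Finset.prod_filter]
  exact (Sfun_key N r hr).2 μ
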